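/- Let E be a real Banach space, let t0 < t1 be real numbers with τ = t1 − t0 and midpoint tm = (t0 + t1)/2, and let u : ℝ → E be twice continuously differentiable on an open interval containing [t0, t1]. Then ‖(u(t0) + u(t1))/2 − u(tm)‖² ≤ (τ³/24) · ∫_{t0}^{t1} ‖u''(t)‖² dt. -/

import Mathlib

open intervalIntegral

/-- Cauchy–Schwarz inequality for interval integrals of continuous functions. -/
lemma cs_integral_aux {a b : ℝ} (hab : a ≤ b) {f g : ℝ → ℝ}
    (hf : ContinuousOn f (Set.Icc a b)) (hg : ContinuousOn g (Set.Icc a b)) :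
    (∫ t in a..b, f t * g t) ^ 2
      ≤ (∫ t in a..b, f t ^ 2) * (∫ t in a..b, g t ^ 2) := by
  have huIcc : Set.uIcc a b = Set.Icc a b := Set.uIcc_of_le hab
  have hf' : ContinuousOn f (Set.uIcc a b) := by rwa [huIcc]
  have hg' : ContinuousOn g (Set.uIcc a b) := by rwa [huIcc]
  have hf2 : IntervalIntegrable (fun t => f t ^ 2) MeasureTheory.volume a b :=
    (hf'.pow 2).intervalIntegrable
  have hg2 : IntervalIntegrable (fun t => g t ^ 2) MeasureTheory.volume a b :=
    (hg'.pow 2).intervalIntegrable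
  have hfg : IntervalIntegrable (fun t => f t * g t) MeasureTheory.volume a b :=
    (hf'.mul hg').intervalIntegrable
  set A := ∫ t in a..b, f t ^ 2 with hA
  set B := ∫ t in a..b, f t * g t with hB
  set C := ∫ t in a..b, g t ^ 2 with hC
  have key : ∀ x : ℝ, 0 ≤ A * x ^ 2 + (2 * B) * x + C := by
    intro x
    have hint : (∫ t in a..b, (x * f t + g t) ^ 2) = A * x ^ 2 + (2 * B) * x + C := by
      have h1 : ∀ t, (x * f t + g t) ^ 2
          = x ^ 2 * f t ^ 2 + 2 * x * (f t * g t) + g t ^ 2 := by intro t; ring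
      simp only [h1]
      rw [intervalIntegral.integral_add ((hf2.const_mul _).add (hfg.const_mul _)) hg2,
        intervalIntegral.integral_add (hf2.const_mul _) (hfg.const_mul _),
        intervalIntegral.integral_const_mul, intervalIntegral.integral_const_mul]
      ring
    have hnn : 0 ≤ ∫ t in a..b, (x * f t + g t) ^ 2 :=
      intervalIntegral.integral_nonneg hab (fun t _ => sq_nonneg _)
    rw [hint] at hnn
    linarith
  have hd : discrim A (2 * B) C ≤ 0 := discrim_le_zero (fun x => by have := key x; nlinarith [this])
  rw [discrim] at hd
  nlinarith [hd]

/-- Vector Cauchy–Schwarz for interval integrals. -/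
lemma norm_integral_smul_sq_le {E : Type*} [NormedAddCommGroup E] [NormedSpace ℝ E]
    {a b : ℝ} (hab : a ≤ b) {φ : ℝ → ℝ} {g : ℝ → E}
    (hφ : ContinuousOn φ (Set.Icc a b)) (hg : ContinuousOn g (Set.Icc a b)) :
    ‖∫ t in a..b, φ t • g t‖ ^ 2
      ≤ (∫ t in a..b, φ t ^ 2) * (∫ t in a..b, ‖g t‖ ^ 2) := by
  have h1 : ‖∫ t in a..b, φ t • g t‖ ≤ ∫ t in a..b, |φ t| * ‖g t‖ := by
    have := intervalIntegral.norm_integral_le_integral_norm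
      (f := fun t => φ t • g t) (a := a) (b := b) (μ := MeasureTheory.volume) hab
    simpa [norm_smul] using this
  have hnn : 0 ≤ ∫ t in a..b, |φ t| * ‖g t‖ :=
    intervalIntegral.integral_nonneg hab
      (fun t _ => mul_nonneg (abs_nonneg _) (norm_nonneg _))
  have h2 : (∫ t in a..b, |φ t| * ‖g t‖) ^ 2
      ≤ (∫ t in a..b, |φ t| ^ 2) * (∫ t in a..b, ‖g t‖ ^ 2) :=
    cs_integral_aux hab hφ.abs hg.norm
  have h3 : (∫ t in a..b, |φ t| ^ 2) = ∫ t in a..b, φ t ^ 2 := by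
    simp [sq_abs]
  calc ‖∫ t in a..b, φ t • g t‖ ^ 2 ≤ (∫ t in a..b, |φ t| * ‖g t‖) ^ 2 := by
        exact pow_le_pow_left₀ (norm_nonneg _) h1 2
    _ ≤ (∫ t in a..b, φ t ^ 2) * (∫ t in a..b, ‖g t‖ ^ 2) := by rw [← h3]; exact h2

/-- Consistency estimate for the midpoint average on a single time step:
if `u` is twice continuously differentiable on an open set containing `[t0, t1]`
(with derivative `u'` and second derivative `u''`), then
`‖(u t0 + u t1)/2 − u ((t0+t1)/2)‖² ≤ ((t1−t0)³/24) · ∫_{t0}^{t1} ‖u'' t‖² dt`. -/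
theorem midpoint_average_consistency
    {E : Type*} [NormedAddCommGroup E] [NormedSpace ℝ E] [CompleteSpace E]
    (t0 t1 : ℝ) (ht : t0 < t1)
    (u u' u'' : ℝ → E) (s : Set ℝ) (hs : IsOpen s) (hsub : Set.Icc t0 t1 ⊆ s)
    (hderiv1 : ∀ t ∈ s, HasDerivAt u (u' t) t)
    (hderiv2 : ∀ t ∈ s, HasDerivAt u' (u'' t) t)
    (hcont : ContinuousOn u'' s) :
    ‖(2 : ℝ)⁻¹ • (u t0 + u t1) - u ((t0 + t1) / 2)‖ ^ 2
      ≤ (t1 - t0) ^ 3 / 24 * ∫ t in t0..t1, ‖u'' t‖ ^ 2 := by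
  set tm := (t0 + t1) / 2 with htm
  have h0m : t0 ≤ tm := by rw [htm]; linarith
  have hm1 : tm ≤ t1 := by rw [htm]; linarith
  have h01 : t0 ≤ t1 := le_of_lt ht
  have hsubm1 : Set.Icc t0 tm ⊆ Set.Icc t0 t1 := Set.Icc_subset_Icc le_rfl hm1
  have hsubm2 : Set.Icc tm t1 ⊆ Set.Icc t0 t1 := Set.Icc_subset_Icc h0m le_rfl
  have hcont' : ContinuousOn u'' (Set.Icc t0 t1) := hcont.mono hsub
  -- FTC on [t0, tm] for F(t) = u t + (t0 - t) • u' t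
  have hF : ∀ t ∈ Set.Icc t0 t1,
      HasDerivAt (fun t => u t + (t0 - t) • u' t) ((t0 - t) • u'' t) t := by
    intro t htI
    have h1 := hderiv1 t (hsub htI)
    have h2 := hderiv2 t (hsub htI)
    have hc : HasDerivAt (fun t : ℝ => t0 - t) (-1) t := by
      simpa using (hasDerivAt_id t).const_sub t0
    have h3 := hc.smul h2
    have h4 := h1.add h3
    convert h4 using 1
    · rfl
    module
  have hG : ∀ t ∈ Set.Icc t0 t1,
      HasDerivAt (fun t => u t + (t1 - t) • u' t) ((t1 - t) • u'' t) t := by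
    intro t htI
    have h1 := hderiv1 t (hsub htI)
    have h2 := hderiv2 t (hsub htI)
    have hc : HasDerivAt (fun t : ℝ => t1 - t) (-1) t := by
      simpa using (hasDerivAt_id t).const_sub t1
    have h3 := hc.smul h2
    have h4 := h1.add h3
    convert h4 using 1
    · rfl
    module
  have hint1 : IntervalIntegrable (fun t => (t0 - t) • u'' t) MeasureTheory.volume t0 tm := by
    apply ContinuousOn.intervalIntegrable
    rw [Set.uIcc_of_le h0m]
    exact ((continuousOn_const.sub continuousOn_id).smul (hcont'.mono hsubm1))
  have hint2 : IntervalIntegrable (fun t => (t1 - t) • u'' t) MeasureTheory.volume tm t1 := by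
    apply ContinuousOn.intervalIntegrable
    rw [Set.uIcc_of_le hm1]
    exact ((continuousOn_const.sub continuousOn_id).smul (hcont'.mono hsubm2))
  have hftc1 : (∫ t in t0..tm, (t0 - t) • u'' t)
      = (u tm + (t0 - tm) • u' tm) - (u t0 + (t0 - t0) • u' t0) := by
    exact intervalIntegral.integral_eq_sub_of_hasDerivAt
      (fun t htI => hF t (hsubm1 (by rwa [Set.uIcc_of_le h0m] at htI))) hint1
  have hftc2 : (∫ t in tm..t1, (t1 - t) • u'' t)
      = (u t1 + (t1 - t1) • u' t1) - (u tm + (t1 - tm) • u' tm) := by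
    exact intervalIntegral.integral_eq_sub_of_hasDerivAt
      (fun t htI => hG t (hsubm2 (by rwa [Set.uIcc_of_le hm1] at htI))) hint2
  set I1 := ∫ t in t0..tm, (t0 - t) • u'' t with hI1def
  set I2 := ∫ t in tm..t1, (t1 - t) • u'' t with hI2def
  -- The key identity
  have hkey : (2 : ℝ)⁻¹ • (u t0 + u t1) - u tm = (2 : ℝ)⁻¹ • (-I1 + I2) := by
    rw [hftc1, hftc2]
    have hmid : t0 - tm = -(t1 - tm) := by rw [htm]; ring
    rw [hmid]
    module
  rw [hkey]
  -- Cauchy–Schwarz bounds for each piece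
  have hA : 0 ≤ ∫ t in t0..tm, ‖u'' t‖ ^ 2 :=
    intervalIntegral.integral_nonneg h0m (fun t _ => sq_nonneg _)
  have hB : 0 ≤ ∫ t in tm..t1, ‖u'' t‖ ^ 2 :=
    intervalIntegral.integral_nonneg hm1 (fun t _ => sq_nonneg _)
  have hcs1 : ‖I1‖ ^ 2 ≤ (∫ t in t0..tm, (t0 - t) ^ 2) * (∫ t in t0..tm, ‖u'' t‖ ^ 2) :=
    norm_integral_smul_sq_le h0m (continuousOn_const.sub continuousOn_id)
      (hcont'.mono hsubm1)
  have hcs2 : ‖I2‖ ^ 2 ≤ (∫ t in tm..t1, (t1 - t) ^ 2) * (∫ t in tm..t1, ‖u'' t‖ ^ 2) :=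
    norm_integral_smul_sq_le hm1 (continuousOn_const.sub continuousOn_id)
      (hcont'.mono hsubm2)
  -- Compute the polynomial integrals
  have hp1 : (∫ t in t0..tm, (t0 - t) ^ 2) = (t1 - t0) ^ 3 / 24 := by
    have : (∫ t in t0..tm, (t0 - t) ^ 2) = ∫ t in (t0 - tm)..(t0 - t0), (t : ℝ) ^ 2 :=
      intervalIntegral.integral_comp_sub_left (fun t => t ^ 2) t0
    rw [this, integral_pow]
    rw [htm]; ring
  have hp2 : (∫ t in tm..t1, (t1 - t) ^ 2) = (t1 - t0) ^ 3 / 24 := by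
    have : (∫ t in tm..t1, (t1 - t) ^ 2) = ∫ t in (t1 - t1)..(t1 - tm), (t : ℝ) ^ 2 :=
      intervalIntegral.integral_comp_sub_left (fun t => t ^ 2) t1
    rw [this, integral_pow]
    rw [htm]; ring
  rw [hp1] at hcs1
  rw [hp2] at hcs2
  -- Splitting the full integral
  have hiA : IntervalIntegrable (fun t => ‖u'' t‖ ^ 2) MeasureTheory.volume t0 tm := by
    apply ContinuousOn.intervalIntegrable
    rw [Set.uIcc_of_le h0m]
    exact ((hcont'.mono hsubm1).norm.pow 2)
  have hiB : IntervalIntegrable (fun t => ‖u'' t‖ ^ 2) MeasureTheory.volume tm t1 := by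
    apply ContinuousOn.intervalIntegrable
    rw [Set.uIcc_of_le hm1]
    exact ((hcont'.mono hsubm2).norm.pow 2)
  have hsplit : (∫ t in t0..tm, ‖u'' t‖ ^ 2) + (∫ t in tm..t1, ‖u'' t‖ ^ 2)
      = ∫ t in t0..t1, ‖u'' t‖ ^ 2 :=
    intervalIntegral.integral_add_adjacent_intervals hiA hiB
  -- Final arithmetic
  have hnorm : ‖(2 : ℝ)⁻¹ • (-I1 + I2)‖ ≤ (2 : ℝ)⁻¹ * (‖I1‖ + ‖I2‖) := by
    rw [norm_smul]
    have : ‖(-I1 + I2)‖ ≤ ‖I1‖ + ‖I2‖ := by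
      calc ‖(-I1 + I2)‖ ≤ ‖-I1‖ + ‖I2‖ := norm_add_le _ _
        _ = ‖I1‖ + ‖I2‖ := by rw [norm_neg]
    calc ‖((2:ℝ)⁻¹ : ℝ)‖ * ‖(-I1 + I2)‖ = (2:ℝ)⁻¹ * ‖(-I1 + I2)‖ := by norm_num
      _ ≤ (2:ℝ)⁻¹ * (‖I1‖ + ‖I2‖) := by
          apply mul_le_mul_of_nonneg_left this; norm_num
  have hK : (0:ℝ) ≤ (t1 - t0) ^ 3 / 24 :=
    div_nonneg (pow_nonneg (by linarith) 3) (by norm_num)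
  have ha := norm_nonneg I1
  have hb := norm_nonneg I2
  rw [← hsplit]
  nlinarith [hnorm, sq_nonneg (‖I1‖ - ‖I2‖), norm_nonneg ((2:ℝ)⁻¹ • (-I1 + I2)),
    mul_nonneg hK hA, mul_nonneg hK hB]
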